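/- Let q be a prime power and m a positive integer. If ψ: F_{q^m}^n → F_{q^m}^n is an F_{q^m}-linear map satisfying rk(ψ(v)) = rk(v) for every v ∈ F_{q^m}^n, then there exist α ∈ F_{q^m}^* and B ∈ GL_n(F_q) such that ψ(v) = α·(v B) for all v ∈ F_{q^m}^n. -/

import Mathlib

open Matrix

/-- The rank weight of `v : Fqm^n`: the dimension over `Fq` of the `Fq`-span of its entries. -/
noncomputable def rkw (Fq : Type*) [Field Fq] {Fqm : Type*} [Field Fqm] [Algebra Fq Fqm]
    {n : ℕ} (v : Fin n → Fqm) : ℕ :=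
  Module.finrank Fq (Submodule.span Fq (Set.range v))

section Aux

variable {Fq Fqm : Type*} [Field Fq] [Field Fqm] [Algebra Fq Fqm]
  [FiniteDimensional Fq Fqm] {n : ℕ}

lemma rkw_eq_zero_iff (v : Fin n → Fqm) : rkw Fq v = 0 ↔ v = 0 := by
  rw [rkw, Submodule.finrank_eq_zero, Submodule.span_eq_bot]
  constructor
  · intro h
    funext k
    exact h (v k) ⟨k, rfl⟩
  · rintro rfl x ⟨k, rfl⟩
    rfl

lemma rkw_eq_one_of_01 (v : Fin n → Fqm) (h0 : ∀ k, v k = 0 ∨ v k = 1)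
    (h1 : ∃ k, v k = 1) : rkw Fq v = 1 := by
  have hspan : Submodule.span Fq (Set.range v) = Submodule.span Fq {(1 : Fqm)} := by
    apply le_antisymm
    · rw [Submodule.span_le]
      rintro x ⟨k, rfl⟩
      rcases h0 k with h | h <;> rw [h]
      · exact Submodule.zero_mem _
      · exact Submodule.mem_span_singleton_self 1
    · rw [Submodule.span_le, Set.singleton_subset_iff]
      obtain ⟨k, hk⟩ := h1
      exact Submodule.subset_span ⟨k, hk⟩
  rw [rkw, hspan]
  exact finrank_span_singleton one_ne_zero

lemma rkw_eq_one_exists (v : Fin n → Fqm) (h : rkw Fq v = 1) :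
    ∃ α : Fqm, α ≠ 0 ∧ ∃ b : Fin n → Fq,
      v = fun k => algebraMap Fq Fqm (b k) * α := by
  rw [rkw, finrank_eq_one_iff'] at h
  obtain ⟨⟨α, hαmem⟩, hα0, hall⟩ := h
  refine ⟨α, by simpa [Submodule.mk_eq_zero] using hα0, ?_⟩
  have key : ∀ k, ∃ c : Fq, c • α = v k := by
    intro k
    obtain ⟨c, hc⟩ := hall ⟨v k, Submodule.subset_span ⟨k, rfl⟩⟩
    exact ⟨c, congrArg Subtype.val hc⟩
  choose b hb using key
  refine ⟨b, funext fun k => ?_⟩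
  rw [← hb k, Algebra.smul_def]

end Aux

/-- Berger: every `Fqm`-linear rank-weight-preserving map of `Fqm^n` is of the form
`v ↦ α • (v B)` with `α ∈ Fqmˣ` and `B ∈ GL_n(Fq)`. -/
theorem stmt2 {Fq Fqm : Type*} [Field Fq] [Fintype Fq] [Field Fqm] [Algebra Fq Fqm]
    [FiniteDimensional Fq Fqm] {n : ℕ} (hn : 0 < n)
    (ψ : (Fin n → Fqm) →ₗ[Fqm] (Fin n → Fqm))
    (hψ : ∀ v : Fin n → Fqm, rkw Fq (ψ v) = rkw Fq v) :
    ∃ (α : Fqmˣ) (B : Matrix (Fin n) (Fin n) Fq), IsUnit B ∧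
      ∀ v : Fin n → Fqm,
        ψ v = (α : Fqm) • Matrix.vecMul v (B.map (algebraMap Fq Fqm)) := by
  classical
  set φ := algebraMap Fq Fqm with hφ
  have hφinj : Function.Injective φ := (algebraMap Fq Fqm).injective
  -- ψ is injective
  have hinj : ∀ v : Fin n → Fqm, ψ v = 0 → v = 0 := by
    intro v hv
    have h := hψ v
    rw [hv, (rkw_eq_zero_iff (0 : Fin n → Fqm)).2 rfl] at h
    exact (rkw_eq_zero_iff v).1 h.symm
  -- standard basis vectors
  set e : Fin n → (Fin n → Fqm) := fun i => Pi.single i 1 with he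
  have he01 : ∀ i k, e i k = 0 ∨ e i k = 1 := by
    intro i k
    by_cases h : k = i
    · subst h; right; simp [he]
    · left; simp [he, Pi.single_eq_of_ne h]
  have hei : ∀ i, e i i = 1 := fun i => by simp [he]
  have hrke : ∀ i, rkw Fq (e i) = 1 := fun i =>
    rkw_eq_one_of_01 _ (he01 i) ⟨i, hei i⟩
  -- images of basis vectors have rank weight 1
  have himg : ∀ i, ∃ α : Fqm, α ≠ 0 ∧ ∃ b : Fin n → Fq,
      ψ (e i) = fun k => φ (b k) * α := by
    intro i
    exact rkw_eq_one_exists _ (by rw [hψ, hrke])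
  choose α hα0 b hb using himg
  have hbne : ∀ i, b i ≠ 0 := by
    intro i hbi
    have : ψ (e i) = 0 := by
      rw [hb i]; funext k
      rw [show b i k = 0 from congrFun hbi k]
      simp
    have := hinj _ this
    have : e i i = 0 := by rw [this]; rfl
    rw [hei i] at this
    exact one_ne_zero this
  -- key step: the α's are proportional over Fq
  have key : ∀ i j : Fin n, i ≠ j → ∃ c : Fq, α j = φ c * α i := by
    intro i j hij
    -- the vector e i + e j has rank weight 1
    have hw : rkw Fq (e i + e j) = 1 := by
      apply rkw_eq_one_of_01
      · intro k
        by_cases hki : k = i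
        · subst hki
          right
          simp [he, Pi.single_eq_of_ne (Ne.symm (by exact fun h => hij h.symm) : k ≠ j)]
        · by_cases hkj : k = j
          · subst hkj
            right
            simp [he, Pi.single_eq_of_ne hki]
          · left
            simp [he, Pi.single_eq_of_ne hki, Pi.single_eq_of_ne hkj]
      · refine ⟨i, ?_⟩
        simp [he, Pi.single_eq_of_ne (show i ≠ j from hij)]
    obtain ⟨β, hβ0, c, hc⟩ := rkw_eq_one_exists (ψ (e i + e j)) (by rw [hψ, hw])
    have hsum : ∀ k, φ (b i k) * α i + φ (b j k) * α j = φ (c k) * β := by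
      intro k
      have h1 : ψ (e i + e j) = ψ (e i) + ψ (e j) := map_add ψ _ _
      have h2 := congrFun (hc ▸ h1.symm : _) k
      rw [Pi.add_apply, hb i, hb j] at h2
      exact h2.symm ▸ (by rw [← h2])
    by_cases hmem : α j ∈ Submodule.span Fq {α i}
    · obtain ⟨a, ha⟩ := Submodule.mem_span_singleton.1 hmem
      exact ⟨a, by rw [← ha, Algebra.smul_def]⟩
    · exfalso
      -- α i and α j are Fq-independent
      have hind : ∀ x y : Fq, φ x * α i + φ y * α j = 0 → x = 0 ∧ y = 0 := by
        intro x y hxy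
        have hy : y = 0 := by
          by_contra hy
          apply hmem
          rw [Submodule.mem_span_singleton]
          refine ⟨-(y⁻¹ * x), ?_⟩
          have hthis : φ y * α j = -(φ x * α i) := by linear_combination hxy
          have hyne : φ y ≠ 0 := fun h => hy (hφinj (by simpa using h))
          rw [Algebra.smul_def]
          apply mul_left_cancel₀ hyne
          rw [hthis, map_neg, _root_.map_mul, map_inv₀]
          field_simp
          rw [← hφ]
          field_simp
        subst hy
        simp only [map_zero, zero_mul, add_zero] at hxy
        rcases mul_eq_zero.1 hxy with h | h
        · exact ⟨by simpa using hφinj (by simpa using h), rfl⟩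
        · exact absurd h (hα0 i)
      -- ψ (e i + e j) ≠ 0, so some c k₀ ≠ 0
      have hwne : ψ (e i + e j) ≠ 0 := by
        intro h
        have h2 := hinj _ h
        have := congrFun h2 i
        rw [Pi.add_apply, hei i,
          show e j i = 0 by simp [he, Pi.single_eq_of_ne (show i ≠ j from hij)]] at this
        simp at this
      obtain ⟨k₀, hk₀⟩ : ∃ k₀, c k₀ ≠ 0 := by
        by_contra h
        push_neg at h
        apply hwne
        rw [hc]; funext k; rw [h k]; simp
      -- express β in terms of α i and α j
      set a : Fq := (c k₀)⁻¹ * b i k₀ with ha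
      set d : Fq := (c k₀)⁻¹ * b j k₀ with hd
      have hβ : β = φ a * α i + φ d * α j := by
        have h0 := hsum k₀
        have hck : φ (c k₀) ≠ 0 := fun h => hk₀ (hφinj (by simpa using h))
        apply mul_left_cancel₀ hck
        rw [← h0, ha, hd, _root_.map_mul, _root_.map_mul, map_inv₀]
        field_simp
      clear_value a d
      -- coefficients: b i l = c l * a and b j l = c l * d for all l
      have hcoef : ∀ l, b i l = c l * a ∧ b j l = c l * d := by
        intro l
        have h0 := hsum l
        rw [hβ] at h0
        have : φ (b i l - c l * a) * α i + φ (b j l - c l * d) * α j = 0 := by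
          simp only [map_sub, _root_.map_mul]
          linear_combination h0
        obtain ⟨h1, h2⟩ := hind _ _ this
        exact ⟨sub_eq_zero.1 h1, sub_eq_zero.1 h2⟩
      -- now ψ (e i) and ψ (e j) are proportional, contradicting injectivity
      have hpsii : ψ (e i) = fun k => φ (c k) * (φ a * α i) := by
        rw [hb i]; funext k; rw [(hcoef k).1, _root_.map_mul]; ring
      have hpsij : ψ (e j) = fun k => φ (c k) * (φ d * α j) := by
        rw [hb j]; funext k; rw [(hcoef k).2, _root_.map_mul]; ring
      have hu : ψ ((φ d * α j) • e i - (φ a * α i) • e j) = 0 := by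
        rw [map_sub, LinearMap.map_smul, LinearMap.map_smul, hpsii, hpsij]
        funext k
        simp only [Pi.sub_apply, Pi.smul_apply, smul_eq_mul, Pi.zero_apply]
        ring
      have hu0 := hinj _ hu
      have huj := congrFun hu0 j
      rw [Pi.sub_apply, Pi.smul_apply, Pi.smul_apply, hei j,
        show e i j = 0 by simp [he, Pi.single_eq_of_ne (Ne.symm (show i ≠ j from hij))],
        Pi.zero_apply] at huj
      simp only [smul_eq_mul, mul_zero, mul_one, zero_sub, neg_eq_zero] at huj
      -- so φ a * α i = 0, hence a = 0
      have ha0 : a = 0 := by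
        rcases mul_eq_zero.1 huj with h | h
        · exact hφinj (by simpa using h)
        · exact absurd h (hα0 i)
      -- but then b i = 0, contradiction
      apply hbne i
      funext l
      rw [(hcoef l).1, ha0, mul_zero]; rfl
  -- fix the base index
  set i₀ : Fin n := ⟨0, hn⟩ with hi₀
  have hcj : ∀ j : Fin n, ∃ c : Fq, α j = φ c * α i₀ := by
    intro j
    by_cases h : i₀ = j
    · exact ⟨1, by rw [← h, _root_.map_one, one_mul]⟩
    · exact key i₀ j h
  choose cc hcc using hcj
  set B : Matrix (Fin n) (Fin n) Fq := Matrix.of fun j k => cc j * b j k with hB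
  -- the formula
  have hform : ∀ v : Fin n → Fqm, ψ v = α i₀ • Matrix.vecMul v (B.map φ) := by
    intro v
    have hv : v = ∑ j, v j • e j := by
      funext k
      rw [Finset.sum_apply]
      simp only [Pi.smul_apply, he, smul_eq_mul]
      rw [Finset.sum_eq_single k]
      · simp
      · intro j _ hj
        rw [Pi.single_eq_of_ne (Ne.symm hj)]; simp
      · intro h; exact absurd (Finset.mem_univ k) h
    conv_lhs => rw [hv]
    rw [map_sum]
    funext k
    simp only [Finset.sum_apply, Pi.smul_apply, LinearMap.map_smul, smul_eq_mul]
    rw [Matrix.vecMul, dotProduct]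
    rw [Finset.mul_sum]
    congr 1
    funext j
    have : ψ (e j) k = φ (b j k) * α j := congrFun (hb j) k
    rw [this, hcc j]
    simp only [hB, Matrix.map_apply, Matrix.of_apply, _root_.map_mul]
    ring
  -- B is invertible
  have hdet : B.det ≠ 0 := by
    intro hdet0
    obtain ⟨v, hv0, hvB⟩ := Matrix.exists_vecMul_eq_zero_iff.2 hdet0
    apply hv0
    have hMB : Matrix.vecMul (fun k => φ (v k)) (B.map φ) = 0 := by
      funext k
      rw [Matrix.vecMul, dotProduct]
      simp only [Matrix.map_apply]
      rw [show (0 : Fin n → Fqm) k = φ ((Matrix.vecMul v B) k) by rw [hvB]; simp]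
      rw [Matrix.vecMul, dotProduct, map_sum]
      congr 1
      funext j
      rw [_root_.map_mul]
    have hψ0 : ψ (fun k => φ (v k)) = 0 := by
      rw [hform, hMB, smul_zero]
    have := hinj _ hψ0
    funext k
    have := congrFun this k
    exact hφinj (by simpa using this)
  refine ⟨Units.mk0 (α i₀) (hα0 i₀), B, ?_, ?_⟩
  · rw [Matrix.isUnit_iff_isUnit_det]
    exact isUnit_iff_ne_zero.2 hdet
  · intro v
    rw [Units.val_mk0]
    exact hform v
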